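/- Let R be a commutative ring with finitely many minimal primes and f(x) ∈ R[x] a monic polynomial of positive degree. Then the ring S = R[x]/(f(x)) has only finitely many minimal primes. -/

import Mathlib

open Polynomial

section Aux

variable {D T : Type*} [CommRing D] [IsDomain D] [CommRing T] [Algebra D T]
  [Module.Finite D T] [Module.Free D T]

/-- Elements of a minimal prime of `T` are "torsion": no image of a nonzero element of `D`
lies in a minimal prime, since such images act injectively on the free module `T`. -/
lemma aux_disjoint (q : Ideal T) (hq : q ∈ minimalPrimes T) :
    Disjoint ((Algebra.algebraMapSubmonoid T (nonZeroDivisors D)) : Set T) (q : Set T) := by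
  rw [Set.disjoint_left]
  rintro x ⟨d, hd, rfl⟩ hxq
  have hd0 : d ≠ 0 := mem_nonZeroDivisors_iff_ne_zero.mp hd
  haveI := hq.1.1
  have hnil : IsNilpotent (algebraMap T (Localization q.primeCompl) (algebraMap D T d)) := by
    have hss : Subsingleton (PrimeSpectrum (Localization q.primeCompl)) :=
      IsLocalization.subsingleton_primeSpectrum_of_mem_minimalPrimes q hq _
    rw [← mem_nilradical, nilradical_eq_sInf, Ideal.mem_sInf]
    intro J hJ
    have hJm : J = IsLocalRing.maximalIdeal (Localization.AtPrime q) :=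
      congrArg PrimeSpectrum.asIdeal (Subsingleton.elim (⟨J, hJ⟩ : PrimeSpectrum _)
        ⟨_, (IsLocalRing.maximalIdeal.isMaximal _).isPrime⟩)
    rw [hJm]
    exact (IsLocalization.AtPrime.to_map_mem_maximal_iff _ q _).mpr hxq
  obtain ⟨n, hn⟩ := hnil
  rw [← map_pow, IsLocalization.map_eq_zero_iff q.primeCompl] at hn
  obtain ⟨c, hc⟩ := hn
  have : (d ^ n) • (c : T) = 0 := by
    rw [Algebra.smul_def, map_pow, mul_comm]
    exact hc
  rcases smul_eq_zero.mp this with h | h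
  · exact pow_ne_zero n hd0 h
  · exact c.2 (h ▸ q.zero_mem)

/-- A module-finite free algebra over a domain has finitely many minimal primes. -/
lemma aux_finite_minimalPrimes (D : Type*) {T : Type*} [CommRing D] [IsDomain D] [CommRing T]
    [Algebra D T] [Module.Finite D T] [Module.Free D T] : (minimalPrimes T).Finite := by
  classical
  let K := FractionRing D
  let Tl := Localization (Algebra.algebraMapSubmonoid T (nonZeroDivisors D))
  letI : Algebra K Tl := localizationAlgebra (nonZeroDivisors D) T
  haveI : IsScalarTower D K Tl := by
    apply IsScalarTower.of_algebraMap_eq'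
    have h1 : algebraMap K Tl = IsLocalization.map (M := nonZeroDivisors D) Tl (algebraMap D T)
        (show nonZeroDivisors D ≤ (Algebra.algebraMapSubmonoid T (nonZeroDivisors D)).comap
          (algebraMap D T) from Submonoid.le_comap_map _) := rfl
    rw [IsScalarTower.algebraMap_eq D T Tl, h1, IsLocalization.map_comp]
  haveI : Module.Finite K Tl :=
    Module.Finite.of_isLocalizedModule (nonZeroDivisors D)
      (IsScalarTower.toAlgHom D T Tl).toLinearMap
  haveI hart : IsArtinian K Tl := isArtinian_of_fg_of_artinian'
  haveI : IsArtinianRing Tl := isArtinian_of_tower K hart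
  have hfin : {I : Ideal Tl | I.IsPrime}.Finite := IsArtinianRing.setOfPred_isPrime_finite Tl
  have hsub : minimalPrimes T ⊆
      (fun P : Ideal Tl => P.comap (algebraMap T Tl)) '' {P : Ideal Tl | P.IsPrime} := by
    intro q hq
    have hdisj := aux_disjoint (D := D) q hq
    exact ⟨q.map (algebraMap T Tl),
      IsLocalization.isPrime_of_isPrime_disjoint
        (Algebra.algebraMapSubmonoid T (nonZeroDivisors D)) Tl q hq.1.1 hdisj,
      IsLocalization.under_map_of_isPrime_disjoint
        (Algebra.algebraMapSubmonoid T (nonZeroDivisors D)) Tl hq.1.1 hdisj⟩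
  exact (hfin.image _).subset hsub

/-- Finiteness of the set of minimal primes transfers along a ring isomorphism. -/
lemma aux_finite_of_equiv {A B : Type*} [CommRing A] [CommRing B] (e : A ≃+* B)
    (h : (minimalPrimes B).Finite) : (minimalPrimes A).Finite := by
  have heq : minimalPrimes A = Ideal.comap (e : A →+* B) '' minimalPrimes B := by
    have h2 := Ideal.comap_minimalPrimes_eq_of_surjective (f := (e : A →+* B)) e.surjective
      (⊥ : Ideal B)
    have hbot : Ideal.comap (e : A →+* B) (⊥ : Ideal B) = ⊥ :=
      Ideal.comap_bot_of_injective _ e.injective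
    rw [hbot] at h2
    exact h2
  rw [heq]
  exact h.image _

end Aux

set_option maxHeartbeats 1000000 in
set_option synthInstance.maxHeartbeats 200000 in
theorem stmt_9 {R : Type*} [CommRing R] (hR : (minimalPrimes R).Finite)
    (f : R[X]) (hf : f.Monic) (hdeg : 0 < f.natDegree) :
    (minimalPrimes (R[X] ⧸ Ideal.span {f})).Finite := by
  classical
  show (minimalPrimes (AdjoinRoot f)).Finite
  have hsub : minimalPrimes (AdjoinRoot f) ⊆
      ⋃ p ∈ minimalPrimes R, (Ideal.map (AdjoinRoot.of f) p).minimalPrimes := by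
    intro q hq
    haveI := hq.1.1
    obtain ⟨p, hp, hple⟩ := Ideal.exists_minimalPrimes_le
      (bot_le : (⊥ : Ideal R) ≤ q.comap (AdjoinRoot.of f))
    refine Set.mem_biUnion hp ⟨⟨hq.1.1, Ideal.map_le_iff_le_comap.mpr hple⟩, ?_⟩
    intro q' hq' hle
    exact hq.2 ⟨hq'.1, bot_le⟩ hle
  refine Set.Finite.subset (hR.biUnion ?_) hsub
  intro p hp
  haveI := hp.1.1
  rw [Ideal.minimalPrimes_eq_comap]
  refine Set.Finite.image _ ?_
  refine aux_finite_of_equiv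
    (B := (R ⧸ p)[X] ⧸ Ideal.span ({f.map (Ideal.Quotient.mk p)} : Set (R ⧸ p)[X]))
    (AdjoinRoot.quotAdjoinRootEquivQuotPolynomialQuot p f) ?_
  have hg : (f.map (Ideal.Quotient.mk p)).Monic := hf.map _
  let pb := AdjoinRoot.powerBasis' hg
  haveI : Module.Free (R ⧸ p)
      ((R ⧸ p)[X] ⧸ Ideal.span ({f.map (Ideal.Quotient.mk p)} : Set (R ⧸ p)[X])) :=
    Module.Free.of_basis pb.basis
  haveI : Module.Finite (R ⧸ p)
      ((R ⧸ p)[X] ⧸ Ideal.span ({f.map (Ideal.Quotient.mk p)} : Set (R ⧸ p)[X])) :=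
    Module.Finite.of_basis pb.basis
  exact aux_finite_minimalPrimes (R ⧸ p)
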